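/- If X is a mutual-visibility set (respectively outer, dual, or total mutual-visibility set) of a graph G and x ∈ X, then X \ {x} is a mutual-visibility set (respectively outer, dual, or total mutual-visibility set) of G − x. -/

import Mathlib

namespace MutualVisibility

open SimpleGraph

variable {V W : Type*}

/-- `x` and `y` are `X`-visible in `G`: there is a shortest `x,y`-path all of whose
internal vertices avoid `X`. -/
def Visible (G : SimpleGraph V) (X : Set V) (x y : V) : Prop :=
  ∃ p : G.Walk x y, p.length = G.dist x y ∧ ∀ v ∈ p.support, v ≠ x → v ≠ y → v ∉ X

/-- `X` is a mutual-visibility set: any two vertices of `X` are `X`-visible. -/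
def IsMutualVisSet (G : SimpleGraph V) (X : Set V) : Prop :=
  ∀ x ∈ X, ∀ y ∈ X, Visible G X x y

/-- outer mutual-visibility set -/
def IsOuterMutualVisSet (G : SimpleGraph V) (X : Set V) : Prop :=
  IsMutualVisSet G X ∧ ∀ x ∈ X, ∀ y ∉ X, Visible G X x y

/-- dual mutual-visibility set -/
def IsDualMutualVisSet (G : SimpleGraph V) (X : Set V) : Prop :=
  IsMutualVisSet G X ∧ ∀ x ∉ X, ∀ y ∉ X, Visible G X x y

/-- total mutual-visibility set -/
def IsTotalMutualVisSet (G : SimpleGraph V) (X : Set V) : Prop :=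
  ∀ x y : V, Visible G X x y

/-- mutual-visibility number μ(G) -/
noncomputable def mu (G : SimpleGraph V) : ℕ :=
  sSup {k | ∃ X : Set V, IsMutualVisSet G X ∧ X.ncard = k}

/-- outer mutual-visibility number μ_o(G) -/
noncomputable def muOuter (G : SimpleGraph V) : ℕ :=
  sSup {k | ∃ X : Set V, IsOuterMutualVisSet G X ∧ X.ncard = k}

/-- dual mutual-visibility number μ_d(G) -/
noncomputable def muDual (G : SimpleGraph V) : ℕ :=
  sSup {k | ∃ X : Set V, IsDualMutualVisSet G X ∧ X.ncard = k}

/-- total mutual-visibility number μ_t(G) -/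
noncomputable def muTotal (G : SimpleGraph V) : ℕ :=
  sSup {k | ∃ X : Set V, IsTotalMutualVisSet G X ∧ X.ncard = k}

/-- `H` contains a subgraph copy of `F`. -/
def ContainsCopy (F : SimpleGraph W) (H : SimpleGraph V) : Prop :=
  ∃ f : W → V, Function.Injective f ∧ ∀ a b, F.Adj a b → H.Adj (f a) (f b)

/-- The Turán number ex(n; F): max number of edges of an `n`-vertex graph with no copy of `F`. -/
noncomputable def exNum (n : ℕ) (F : SimpleGraph W) : ℕ :=
  sSup {k | ∃ H : SimpleGraph (Fin n), ¬ ContainsCopy F H ∧ H.edgeSet.ncard = k}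

/-- The direct (tensor/categorical) product of graphs. -/
def directProd (G : SimpleGraph V) (H : SimpleGraph W) : SimpleGraph (V × W) where
  Adj x y := G.Adj x.1 y.1 ∧ H.Adj x.2 y.2
  symm := ⟨fun _ _ h => ⟨h.1.symm, h.2.symm⟩⟩
  loopless := ⟨fun x h => G.irrefl h.1⟩

/-- The join `G + H` of two graphs. -/
def graphJoin (G : SimpleGraph V) (H : SimpleGraph W) : SimpleGraph (V ⊕ W) where
  Adj u v := match u, v with
    | Sum.inl a, Sum.inl b => G.Adj a b
    | Sum.inr a, Sum.inr b => H.Adj a b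
    | _, _ => True
  symm := ⟨fun u v => match u, v with
    | Sum.inl _, Sum.inl _ => fun h => G.adj_symm h
    | Sum.inr _, Sum.inr _ => fun h => H.adj_symm h
    | Sum.inl _, Sum.inr _ => fun _ => trivial
    | Sum.inr _, Sum.inl _ => fun _ => trivial⟩
  loopless := ⟨fun u => match u with
    | Sum.inl a => G.irrefl (v := a)
    | Sum.inr a => H.irrefl (v := a)⟩

/-- A big-μ graph: `G = (K_1 ∪ K_t) + H` for some `t ≥ 0` and some graph `H`. -/
def IsBigMu {V : Type} (G : SimpleGraph V) : Prop :=
  ∃ (t : ℕ) (W : Type) (H : SimpleGraph W),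
    Nonempty (G ≃g graphJoin ((⊤ : SimpleGraph (Fin 1)) ⊕g (⊤ : SimpleGraph (Fin t))) H)

/-- A cograph: a graph with no induced path on four vertices. -/
def IsCograph (G : SimpleGraph V) : Prop :=
  ¬ ∃ f : Fin 4 → V, Function.Injective f ∧
      ∀ a b, (pathGraph 4).Adj a b ↔ G.Adj (f a) (f b)

/-- The Petersen graph, realized as the Kneser graph K(5,2). -/
def petersen : SimpleGraph {s : Finset (Fin 5) // s.card = 2} where
  Adj a b := Disjoint a.1 b.1
  symm := ⟨fun _ _ h => h.symm⟩
  loopless := by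
    constructor
    rintro ⟨s, hs⟩ h
    rw [disjoint_self, Finset.bot_eq_empty] at h
    subst h
    simp at hs

/-- Lift a walk whose support lies in `s` to a walk in the induced subgraph. -/
lemma walk_lift {V : Type*} {G : SimpleGraph V} {s : Set V} :
    ∀ {a b : V} (p : G.Walk a b) (ha : a ∈ s) (hb : b ∈ s)
      (_ : ∀ v ∈ p.support, v ∈ s),
      ∃ q : (G.induce s).Walk ⟨a, ha⟩ ⟨b, hb⟩,
        q.length = p.length ∧ ∀ v ∈ q.support, (v : V) ∈ p.support := by
  intro a b p
  induction p with
  | nil =>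
    intro ha hb _
    exact ⟨SimpleGraph.Walk.nil, rfl, by simp⟩
  | @cons a c b hadj p ih =>
    intro ha hb hsup
    have hc : c ∈ s := hsup c (by simp)
    obtain ⟨q, hlen, hsub⟩ := ih hc hb (fun v hv => hsup v (by simp [hv]))
    refine ⟨SimpleGraph.Walk.cons (by exact hadj : (G.induce s).Adj ⟨a, ha⟩ ⟨c, hc⟩) q,
      by exact congrArg (· + 1) hlen, ?_⟩
    intro v hv
    rcases (SimpleGraph.Walk.mem_support_iff _).mp hv with h | h
    · simp [h]
    · simpa using Or.inr (hsub v h)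

/-- The inclusion hom from an induced subgraph. -/
def induceHom' {V : Type*} (G : SimpleGraph V) (s : Set V) : G.induce s →g G :=
  ⟨Subtype.val, fun h => h⟩

lemma visible_lift {V : Type*} {G : SimpleGraph V} {X : Set V} {x : V} (hx : x ∈ X)
    (u v : ({y | y ≠ x} : Set V)) (h : Visible G X u v) :
    Visible (G.induce {y | y ≠ x}) {u : ({y | y ≠ x} : Set V) | (u : V) ∈ X} u v := by
  obtain ⟨p, hlen, hint⟩ := h
  have hsup : ∀ w ∈ p.support, w ∈ ({y | y ≠ x} : Set V) := by
    intro w hw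
    by_cases hwu : w = (u : V)
    · subst hwu; exact u.2
    by_cases hwv : w = (v : V)
    · subst hwv; exact v.2
    · intro hwx; exact hint w hw hwu hwv (hwx ▸ hx)
  obtain ⟨q, hqlen, hqsub⟩ := walk_lift p u.2 v.2 hsup
  have hmap : ((G.induce {y | y ≠ x}).dist u v : ℕ) ≤ q.length := SimpleGraph.dist_le q
  have hreach : (G.induce {y | y ≠ x}).Reachable u v := ⟨q⟩
  obtain ⟨r, hr⟩ := hreach.exists_walk_length_eq_dist
  have hGle : G.dist u v ≤ (G.induce {y | y ≠ x}).dist u v := by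
    have := SimpleGraph.dist_le (r.map (induceHom' G _))
    rwa [SimpleGraph.Walk.length_map, hr] at this
  have hqd : q.length = (G.induce {y | y ≠ x}).dist u v := by
    omega
  refine ⟨q, hqd, ?_⟩
  intro w hw hwu hwv
  have hwc : (w : V) ∈ p.support := hqsub w hw
  exact hint w hwc (fun h => hwu (Subtype.ext h)) (fun h => hwv (Subtype.ext h))

theorem mv_set_delete_vertex {V : Type*} (G : SimpleGraph V) (X : Set V) (x : V) (hx : x ∈ X) :
    (IsMutualVisSet G X →
      IsMutualVisSet (G.induce {y | y ≠ x})
        {u : ({y | y ≠ x} : Set V) | (u : V) ∈ X}) ∧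
    (IsOuterMutualVisSet G X →
      IsOuterMutualVisSet (G.induce {y | y ≠ x})
        {u : ({y | y ≠ x} : Set V) | (u : V) ∈ X}) ∧
    (IsDualMutualVisSet G X →
      IsDualMutualVisSet (G.induce {y | y ≠ x})
        {u : ({y | y ≠ x} : Set V) | (u : V) ∈ X}) ∧
    (IsTotalMutualVisSet G X →
      IsTotalMutualVisSet (G.induce {y | y ≠ x})
        {u : ({y | y ≠ x} : Set V) | (u : V) ∈ X}) := by
  refine ⟨fun h u hu v hv => visible_lift hx u v (h u hu v hv),
    fun h => ⟨fun u hu v hv => visible_lift hx u v (h.1 u hu v hv),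
      fun u hu v hv => visible_lift hx u v (h.2 u hu v hv)⟩,
    fun h => ⟨fun u hu v hv => visible_lift hx u v (h.1 u hu v hv),
      fun u hu v hv => visible_lift hx u v (h.2 u hu v hv)⟩,
    fun h u v => visible_lift hx u v (h u v)⟩
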